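/- arXiv:2509.12173 — 4 statements merged into one kernel-verified Lean document; each statement's English description precedes it below -/
import Mathlib

section
/- Under the stated integrability of ℓ = log L with respect to p_0, the map t ↦ Z_t = ∫ p_0(x) L(x)^t dx is differentiable on [0,1] with derivative ∂_t Z_t = Z_t · E_{p_t}[ℓ], and consequently the tempered density satisfies ∂_t p_t(x) = (ℓ(x) − E_{p_t}[ℓ]) · p_t(x). -/
open MeasureTheory Set

/-- MVT estimate: for `0 < a ≤ 1` and nonnegative exponents, `|a^s - a^t| ≤ |log a| * |s - t|`. -/
lemma aux_rpow_lip {a : ℝ} (ha : 0 < a) (ha1 : a ≤ 1) :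
    ∀ s t : ℝ, 0 ≤ s → 0 ≤ t → |a ^ s - a ^ t| ≤ |Real.log a| * |s - t| := by
  have key : ∀ s t : ℝ, 0 ≤ s → 0 ≤ t → t < s → |a ^ s - a ^ t| ≤ |Real.log a| * |s - t| := by
    intro s t hs ht hts
    have hcont : ContinuousOn (fun u : ℝ => a ^ u) (Icc t s) := by
      intro u _
      exact ((Real.hasStrictDerivAt_const_rpow ha u).hasDerivAt.continuousAt).continuousWithinAt
    have hderiv : ∀ u ∈ Ioo t s, HasDerivAt (fun u : ℝ => a ^ u) (a ^ u * Real.log a) u :=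
      fun u _ => (Real.hasStrictDerivAt_const_rpow ha u).hasDerivAt
    obtain ⟨ξ, hξ, hξeq⟩ := exists_hasDerivAt_eq_slope (fun u : ℝ => a ^ u)
      (fun u => a ^ u * Real.log a) hts hcont hderiv
    have hξ0 : 0 ≤ ξ := le_trans ht hξ.1.le
    have haξ : a ^ ξ ≤ 1 := Real.rpow_le_one ha.le ha1 hξ0
    have haξ0 : 0 < a ^ ξ := Real.rpow_pos_of_pos ha ξ
    have hst : s - t ≠ 0 := sub_ne_zero.mpr hts.ne'
    rw [eq_div_iff hst] at hξeq
    have : a ^ s - a ^ t = (a ^ ξ * Real.log a) * (s - t) := by linarith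
    rw [this, abs_mul, abs_mul]
    have h1 : |a ^ ξ| ≤ 1 := by rw [abs_of_pos haξ0]; exact haξ
    calc |a ^ ξ| * |Real.log a| * |s - t| ≤ 1 * |Real.log a| * |s - t| := by
          apply mul_le_mul_of_nonneg_right (mul_le_mul_of_nonneg_right h1 (abs_nonneg _))
            (abs_nonneg _)
      _ = |Real.log a| * |s - t| := by ring
  intro s t hs ht
  rcases lt_trichotomy t s with h | h | h
  · exact key s t hs ht h
  · simp [h]
  · rw [abs_sub_comm, abs_sub_comm s t]; exact key t s ht hs h

/-- Derivative of the tempered normalising constant and of the tempered posterior pdf: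
`∂ₜ Z_t = Z_t ⬝ E_{p_t}[ℓ]` and `∂ₜ p_t(x) = (ℓ(x) − E_{p_t}[ℓ]) p_t(x)` on `[0,1]`,
where `ℓ = log L`. -/
theorem stmt_4 (d : ℕ) (p0 L : (Fin d → ℝ) → ℝ)
    (hp0m : Measurable p0) (hp0 : ∀ x, 0 ≤ p0 x) (hp0int : ∫ x, p0 x = 1)
    (hLm : Measurable L) (hLpos : ∀ x, 0 < L x)
    (c : ℝ) (hc : c < 1) (hLb : ∀ x, L x ≤ c)
    (hℓint : Integrable (fun x => p0 x * |Real.log (L x)|))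
    (Z : ℝ → ℝ) (hZ : ∀ t, Z t = ∫ x, p0 x * L x ^ t)
    (p : ℝ → (Fin d → ℝ) → ℝ) (hp : ∀ t x, p t x = p0 x * L x ^ t / Z t) :
    ∀ t ∈ Icc (0 : ℝ) 1,
      HasDerivWithinAt Z (Z t * ∫ x, Real.log (L x) * p t x) (Icc 0 1) t ∧
        ∀ x, HasDerivWithinAt (fun s => p s x)
          ((Real.log (L x) - ∫ x', Real.log (L x') * p t x') * p t x) (Icc 0 1) t := by
  have hL1 : ∀ x, L x ≤ 1 := fun x => (hLb x).trans hc.le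
  -- measurability of x ↦ L x ^ s
  have hrm : ∀ s : ℝ, Measurable fun x => L x ^ s := by
    intro s
    have : (fun x => L x ^ s) = fun x => Real.exp (Real.log (L x) * s) :=
      funext fun x => Real.rpow_def_of_pos (hLpos x) s
    rw [this]
    exact Real.measurable_exp.comp ((Real.measurable_log.comp hLm).mul measurable_const)
  have hp0i : Integrable p0 := integrable_of_integral_eq_one hp0int
  -- integrability of p0 * L^s for s ≥ 0
  have hint : ∀ s : ℝ, 0 ≤ s → Integrable fun x => p0 x * L x ^ s := by
    intro s hs
    refine Integrable.mono hp0i ((hp0m.mul (hrm s)).aestronglyMeasurable) ?_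
    filter_upwards with x
    have h1 : 0 < L x ^ s := Real.rpow_pos_of_pos (hLpos x) s
    have h2 : L x ^ s ≤ 1 := Real.rpow_le_one (hLpos x).le (hL1 x) hs
    rw [Real.norm_eq_abs, Real.norm_eq_abs, abs_of_nonneg (hp0 x),
      abs_of_nonneg (mul_nonneg (hp0 x) h1.le)]
    nlinarith [hp0 x]
  intro t ht
  have ht0 : (0:ℝ) ≤ t := ht.1
  have ht1 : t ≤ 1 := ht.2
  -- positivity of Z t
  have hZpos : 0 < Z t := by
    rw [hZ t]
    rcases lt_or_eq_of_le (integral_nonneg (f := fun x => p0 x * L x ^ t) fun x =>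
      mul_nonneg (hp0 x) (Real.rpow_pos_of_pos (hLpos x) t).le) with h | h
    · exact h
    · exfalso
      have h0 : (fun x => p0 x * L x ^ t) =ᵐ[volume] 0 := by
        rw [← integral_eq_zero_iff_of_nonneg
          (fun x => mul_nonneg (hp0 x) (Real.rpow_pos_of_pos (hLpos x) t).le) (hint t ht0)]
        exact h.symm
      have hp00 : p0 =ᵐ[volume] 0 := by
        filter_upwards [h0] with x hx
        have := (Real.rpow_pos_of_pos (hLpos x) t).ne'
        simp only [Pi.zero_apply] at hx ⊢
        exact (mul_eq_zero.mp hx).resolve_right this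
      have : ∫ x, p0 x = 0 := by
        rw [integral_congr_ae hp00]; simp
      rw [hp0int] at this; norm_num at this
  have hZne : Z t ≠ 0 := hZpos.ne'
  -- derivative of Z within Icc 0 1
  have hD : HasDerivWithinAt Z (∫ x, p0 x * L x ^ t * Real.log (L x)) (Icc 0 1) t := by
    rw [hasDerivWithinAt_iff_tendsto_slope]
    have main := MeasureTheory.tendsto_integral_filter_of_dominated_convergence
      (μ := (volume : Measure (Fin d → ℝ)))
      (F := fun (s : ℝ) x => (s - t)⁻¹ * (p0 x * L x ^ s - p0 x * L x ^ t))
      (f := fun x => p0 x * L x ^ t * Real.log (L x))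
      (l := nhdsWithin t (Icc (0:ℝ) 1 \ {t}))
      (bound := fun x => p0 x * |Real.log (L x)|)
      (by
        filter_upwards with s
        exact (measurable_const.mul ((hp0m.mul (hrm s)).sub (hp0m.mul (hrm t)))).aestronglyMeasurable)
      (by
        filter_upwards [self_mem_nhdsWithin] with s hs
        filter_upwards with x
        obtain ⟨⟨hs0, hs1⟩, hsne⟩ := hs
        have hsne' : s - t ≠ 0 := sub_ne_zero.mpr (by simpa using hsne)
        have key := aux_rpow_lip (hLpos x) (hL1 x) s t hs0 ht0
        have h1 : p0 x * L x ^ s - p0 x * L x ^ t = p0 x * (L x ^ s - L x ^ t) := by ring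
        rw [Real.norm_eq_abs, h1, abs_mul, abs_mul, abs_inv, abs_of_nonneg (hp0 x)]
        have habs : 0 < |s - t| := abs_pos.mpr hsne'
        rw [inv_mul_le_iff₀ habs]
        calc p0 x * |L x ^ s - L x ^ t| ≤ p0 x * (|Real.log (L x)| * |s - t|) :=
              mul_le_mul_of_nonneg_left key (hp0 x)
          _ = |s - t| * (p0 x * |Real.log (L x)|) := by ring)
      hℓint
      (by
        filter_upwards with x
        have hd : HasDerivAt (fun u : ℝ => p0 x * L x ^ u)
            (p0 x * (L x ^ t * Real.log (L x))) t :=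
          ((Real.hasStrictDerivAt_const_rpow (hLpos x) t).hasDerivAt).const_mul (p0 x)
        have := hasDerivWithinAt_iff_tendsto_slope.mp (hd.hasDerivWithinAt (s := Icc (0:ℝ) 1))
        have heq : p0 x * (L x ^ t * Real.log (L x)) = p0 x * L x ^ t * Real.log (L x) := by ring
        rw [heq] at this
        refine this.congr' ?_
        filter_upwards [self_mem_nhdsWithin] with s hs
        simp [slope, vsub_eq_sub, smul_eq_mul])
    refine main.congr' ?_
    filter_upwards [self_mem_nhdsWithin] with s hs
    obtain ⟨⟨hs0, hs1⟩, _⟩ := hs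
    rw [integral_const_mul, integral_sub (hint s hs0) (hint t ht0), ← hZ s, ← hZ t]
    simp [slope, vsub_eq_sub, smul_eq_mul]
  -- rewrite the derivative value of Z
  have hE : Z t * ∫ x, Real.log (L x) * p t x = ∫ x, p0 x * L x ^ t * Real.log (L x) := by
    have hfun : (fun x => Real.log (L x) * p t x)
        = fun x => (p0 x * L x ^ t * Real.log (L x)) * (Z t)⁻¹ := by
      funext x; rw [hp t x]; field_simp
    rw [hfun, integral_mul_const]
    field_simp
  have hZD : HasDerivWithinAt Z (Z t * ∫ x, Real.log (L x) * p t x) (Icc 0 1) t := by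
    rw [hE]; exact hD
  refine ⟨hZD, fun x => ?_⟩
  -- derivative of p · x via quotient rule
  have hnum : HasDerivWithinAt (fun s : ℝ => p0 x * L x ^ s)
      (p0 x * (L x ^ t * Real.log (L x))) (Icc 0 1) t :=
    (((Real.hasStrictDerivAt_const_rpow (hLpos x) t).hasDerivAt).const_mul (p0 x)).hasDerivWithinAt
  have hdiv := hnum.div hZD hZne
  have hcongr : HasDerivWithinAt (fun s => p s x)
      ((p0 x * (L x ^ t * Real.log (L x)) * Z t
        - p0 x * L x ^ t * (Z t * ∫ x', Real.log (L x') * p t x')) / Z t ^ 2) (Icc 0 1) t :=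
    hdiv.congr (fun s _ => hp s x) (hp t x)
  have hval : (p0 x * (L x ^ t * Real.log (L x)) * Z t
        - p0 x * L x ^ t * (Z t * ∫ x', Real.log (L x') * p t x')) / Z t ^ 2
      = (Real.log (L x) - ∫ x', Real.log (L x') * p t x') * p t x := by
    rw [hp t x]; field_simp
  rw [hval] at hcongr
  exact hcongr
end

section
/- For the tempered expectation g(t) = E_{p_t}[f], assuming the moments E_{p_0}[|f ℓ^n|] and E_{p_0}[|ℓ^n|] exist for all n ≤ k, the recurrence E_{p_t}[f ℓ^k] = ∑_{n=0}^{k} C(k,n) · g^{(k−n)}(t) · E_{p_t}[ℓ^n] holds for all t ∈ [0,1], where C(k,n) is the binomial coefficient; in particular for k = 1, g'(t) = E_{p_t}[f ℓ] − E_{p_t}[f] E_{p_t}[ℓ]. -/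
open MeasureTheory Set Filter


lemma aux_meas {d : ℕ} {p0 L φ : (Fin d → ℝ) → ℝ} (hp0m : Measurable p0)
    (hLm : Measurable L) (hφ : Measurable φ) (t : ℝ) :
    AEStronglyMeasurable (fun x => φ x * L x ^ t * p0 x) volume :=
  ((hφ.mul (hLm.pow_const t)).mul hp0m).aestronglyMeasurable

lemma aux_int {d : ℕ} {p0 L φ : (Fin d → ℝ) → ℝ} (hp0m : Measurable p0) (hp0 : ∀ x, 0 ≤ p0 x)
    (hLm : Measurable L) (hLpos : ∀ x, 0 < L x) (hL1 : ∀ x, L x ≤ 1) (hφ : Measurable φ)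
    (hint : Integrable (fun x => |φ x| * p0 x)) {t : ℝ} (ht : 0 ≤ t) :
    Integrable (fun x => φ x * L x ^ t * p0 x) := by
  refine hint.mono (aux_meas hp0m hLm hφ t) (Filter.Eventually.of_forall fun x => ?_)
  have h1 : (0:ℝ) < L x ^ t := Real.rpow_pos_of_pos (hLpos x) t
  have h2 : L x ^ t ≤ 1 := Real.rpow_le_one (hLpos x).le (hL1 x) ht
  rw [Real.norm_eq_abs, Real.norm_eq_abs, abs_mul, abs_mul, abs_mul, abs_of_nonneg (hp0 x),
    abs_of_nonneg h1.le, abs_abs]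
  calc |φ x| * L x ^ t * p0 x ≤ |φ x| * 1 * p0 x := by
        apply mul_le_mul_of_nonneg_right (mul_le_mul_of_nonneg_left h2 (abs_nonneg _)) (hp0 x)
    _ = |φ x| * p0 x := by ring

lemma aux_ptderiv {d : ℕ} (p0 L φ : (Fin d → ℝ) → ℝ) (hLpos : ∀ x, 0 < L x) (x : Fin d → ℝ)
    (t : ℝ) : HasDerivAt (fun s => φ x * L x ^ s * p0 x)
      (φ x * Real.log (L x) * L x ^ t * p0 x) t := by
  have h := ((Real.hasStrictDerivAt_const_rpow (hLpos x) t).hasDerivAt.const_mul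
    (φ x)).mul_const (p0 x)
  exact h.congr_deriv (by ring)

lemma aux_mvt {d : ℕ} (L : (Fin d → ℝ) → ℝ) (hLpos : ∀ x, 0 < L x) (hL1 : ∀ x, L x ≤ 1)
    (x : Fin d → ℝ) {s u : ℝ} (hs : s ∈ Icc (0:ℝ) 1) (hu : u ∈ Icc (0:ℝ) 1) :
    |L x ^ s - L x ^ u| ≤ |Real.log (L x)| * |s - u| := by
  have := Convex.norm_image_sub_le_of_norm_hasDerivWithin_le
    (f := fun r => L x ^ r) (f' := fun r => L x ^ r * Real.log (L x))
    (C := |Real.log (L x)|) (s := Icc (0:ℝ) 1)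
    (fun r _ => ((Real.hasStrictDerivAt_const_rpow (hLpos x) r).hasDerivAt).hasDerivWithinAt)
    (fun r hr => ?_) (convex_Icc 0 1) hu hs
  · simpa [Real.norm_eq_abs] using this
  · rw [Real.norm_eq_abs, abs_mul]
    have h2 : L x ^ r ≤ 1 := Real.rpow_le_one (hLpos x).le (hL1 x) hr.1
    have h1 : (0:ℝ) < L x ^ r := Real.rpow_pos_of_pos (hLpos x) r
    calc |L x ^ r| * |Real.log (L x)| ≤ 1 * |Real.log (L x)| := by
          apply mul_le_mul_of_nonneg_right _ (abs_nonneg _)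
          rw [abs_of_nonneg h1.le]; exact h2
      _ = _ := one_mul _

section
variable {d : ℕ} {p0 L φ : (Fin d → ℝ) → ℝ}

lemma aux_deriv (hp0m : Measurable p0) (hp0 : ∀ x, 0 ≤ p0 x)
    (hLm : Measurable L) (hLpos : ∀ x, 0 < L x) (hL1 : ∀ x, L x ≤ 1) (hφ : Measurable φ)
    (h0 : Integrable (fun x => |φ x| * p0 x))
    (h1 : Integrable (fun x => |φ x * Real.log (L x)| * p0 x))
    {t : ℝ} (ht : t ∈ Icc (0:ℝ) 1) :
    HasDerivWithinAt (fun s => ∫ x, φ x * L x ^ s * p0 x)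
      (∫ x, φ x * Real.log (L x) * L x ^ t * p0 x) (Icc 0 1) t := by
  rw [hasDerivWithinAt_iff_tendsto_slope]
  have key : Tendsto (fun s => ∫ x, (s - t)⁻¹ * (φ x * L x ^ s * p0 x - φ x * L x ^ t * p0 x))
      (nhdsWithin t (Icc (0:ℝ) 1 \ {t}))
      (nhds (∫ x, φ x * Real.log (L x) * L x ^ t * p0 x)) := by
    apply tendsto_integral_filter_of_dominated_convergence
      (fun x => |φ x * Real.log (L x)| * p0 x)
    · filter_upwards with s
      exact ((aux_meas hp0m hLm hφ s).sub (aux_meas hp0m hLm hφ t)).const_mul _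
    · filter_upwards [self_mem_nhdsWithin] with s hs
      filter_upwards with x
      have hst : s ≠ t := hs.2
      have habs : (0:ℝ) < |s - t| := by
        rw [abs_pos]; exact sub_ne_zero.mpr hst
      have hb := aux_mvt L hLpos hL1 x hs.1 ht
      have e0 : φ x * L x ^ s * p0 x - φ x * L x ^ t * p0 x
          = φ x * p0 x * (L x ^ s - L x ^ t) := by ring
      have e1 : ‖(s - t)⁻¹ * (φ x * L x ^ s * p0 x - φ x * L x ^ t * p0 x)‖
          = |s - t|⁻¹ * (|φ x * p0 x| * |L x ^ s - L x ^ t|) := by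
        rw [Real.norm_eq_abs, e0, abs_mul, abs_inv, abs_mul]
      rw [e1]
      calc |s - t|⁻¹ * (|φ x * p0 x| * |L x ^ s - L x ^ t|)
          ≤ |s - t|⁻¹ * (|φ x * p0 x| * (|Real.log (L x)| * |s - t|)) := by
            apply mul_le_mul_of_nonneg_left
              (mul_le_mul_of_nonneg_left hb (abs_nonneg _)) (inv_nonneg.mpr habs.le)
        _ = |φ x * p0 x| * |Real.log (L x)| := by
            field_simp
        _ = |φ x * Real.log (L x)| * p0 x := by
            rw [abs_mul, abs_mul, abs_of_nonneg (hp0 x)]; ring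
    · exact h1
    · filter_upwards with x
      have hd := hasDerivAt_iff_tendsto_slope.mp (aux_ptderiv p0 L φ hLpos x t)
      have hmono : nhdsWithin t (Icc (0:ℝ) 1 \ {t}) ≤ nhdsWithin t {t}ᶜ :=
        nhdsWithin_mono t (fun y hy => hy.2)
      refine (hd.mono_left hmono).congr fun s => ?_
      rw [slope_def_field]
      rw [div_eq_inv_mul]
  refine key.congr' ?_
  filter_upwards [self_mem_nhdsWithin] with s hs
  have hst : s ≠ t := hs.2
  have hIs : Integrable (fun x => φ x * L x ^ s * p0 x) :=
    aux_int hp0m hp0 hLm hLpos hL1 hφ h0 hs.1.1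
  have hIt : Integrable (fun x => φ x * L x ^ t * p0 x) :=
    aux_int hp0m hp0 hLm hLpos hL1 hφ h0 ht.1
  rw [integral_const_mul, integral_sub hIs hIt, slope_def_field, div_eq_inv_mul]

lemma aux_cont (hp0m : Measurable p0) (hp0 : ∀ x, 0 ≤ p0 x)
    (hLm : Measurable L) (hLpos : ∀ x, 0 < L x) (hL1 : ∀ x, L x ≤ 1) (hφ : Measurable φ)
    (h0 : Integrable (fun x => |φ x| * p0 x)) :
    ContinuousOn (fun s => ∫ x, φ x * L x ^ s * p0 x) (Icc (0:ℝ) 1) := by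
  intro t ht
  unfold ContinuousWithinAt
  apply tendsto_integral_filter_of_dominated_convergence (fun x => |φ x| * p0 x)
  · filter_upwards with s
    exact aux_meas hp0m hLm hφ s
  · filter_upwards [self_mem_nhdsWithin] with s hs
    filter_upwards with x
    have h1 : (0:ℝ) < L x ^ s := Real.rpow_pos_of_pos (hLpos x) s
    have h2 : L x ^ s ≤ 1 := Real.rpow_le_one (hLpos x).le (hL1 x) hs.1
    rw [Real.norm_eq_abs, abs_mul, abs_mul, abs_of_nonneg (hp0 x), abs_of_nonneg h1.le]
    calc |φ x| * L x ^ s * p0 x ≤ |φ x| * 1 * p0 x := by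
          apply mul_le_mul_of_nonneg_right
            (mul_le_mul_of_nonneg_left h2 (abs_nonneg _)) (hp0 x)
      _ = |φ x| * p0 x := by ring
  · exact h0
  · filter_upwards with x
    exact ((aux_ptderiv p0 L φ hLpos x t).continuousAt.tendsto).mono_left nhdsWithin_le_nhds
end

lemma leibniz_within {F G : ℝ → ℝ} {s : Set ℝ} (hs : UniqueDiffOn ℝ s) :
    ∀ (n : ℕ), ContDiffOn ℝ n F s → ContDiffOn ℝ n G s → ∀ x ∈ s,
    iteratedDerivWithin n (fun y => F y * G y) s x
      = ∑ i ∈ Finset.range (n + 1), (n.choose i : ℝ) *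
          iteratedDerivWithin (n - i) F s x * iteratedDerivWithin i G s x := by
  intro n
  induction n with
  | zero => intro hF hG x hx; simp
  | succ n IH =>
    intro hF hG x hx
    have hle : ((n : ℕ∞) : WithTop ℕ∞) ≤ ((n + 1 : ℕ) : WithTop ℕ∞) := by
      exact_mod_cast Nat.le_succ n
    have hFn : ContDiffOn ℝ n F s := hF.of_le hle
    have hGn : ContDiffOn ℝ n G s := hG.of_le hle
    have hder : ∀ (H : ℝ → ℝ), ContDiffOn ℝ (n + 1) H s → ∀ i ≤ n,
        HasDerivWithinAt (iteratedDerivWithin i H s)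
          (iteratedDerivWithin (i + 1) H s x) s x := by
      intro H hH i hi
      have hlt : ((i : ℕ∞) : WithTop ℕ∞) < ((n + 1 : ℕ) : WithTop ℕ∞) := by
        exact_mod_cast Nat.lt_succ_of_le hi
      have hdiff := hH.differentiableOn_iteratedDerivWithin hlt hs
      have h2 := (hdiff x hx).hasDerivWithinAt
      rwa [← iteratedDerivWithin_succ] at h2
    have hsum : HasDerivWithinAt
        (fun y => ∑ i ∈ Finset.range (n + 1), (n.choose i : ℝ) *
          iteratedDerivWithin (n - i) F s y * iteratedDerivWithin i G s y)
        (∑ i ∈ Finset.range (n + 1),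
          (((n.choose i : ℝ) * iteratedDerivWithin (n - i + 1) F s x)
              * iteratedDerivWithin i G s x
            + ((n.choose i : ℝ) * iteratedDerivWithin (n - i) F s x)
              * iteratedDerivWithin (i + 1) G s x)) s x := by
      apply HasDerivWithinAt.fun_sum
      intro i hi
      have hF' := hder F hF (n - i) (Nat.sub_le n i)
      have hG' := hder G hG i (Nat.lt_succ_iff.mp (Finset.mem_range.mp hi))
      exact (hF'.const_mul ((n.choose i : ℝ))).mul hG'
    have heq : Set.EqOn (iteratedDerivWithin n (fun y => F y * G y) s)
        (fun y => ∑ i ∈ Finset.range (n + 1), (n.choose i : ℝ) *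
          iteratedDerivWithin (n - i) F s y * iteratedDerivWithin i G s y) s :=
      fun y hy => IH hFn hGn y hy
    have hmain := hsum.congr heq (heq hx)
    rw [iteratedDerivWithin_succ, hmain.derivWithin (hs x hx)]
    calc _ = (∑ i ∈ Finset.range (n + 1), (n.choose i : ℝ) *
            (iteratedDerivWithin (n + 1 - i) F s x * iteratedDerivWithin i G s x))
          + ∑ i ∈ Finset.range (n + 1), (n.choose i : ℝ) *
            (iteratedDerivWithin (n - i) F s x * iteratedDerivWithin (i + 1) G s x) := by
          rw [← Finset.sum_add_distrib]
          apply Finset.sum_congr rfl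
          intro i hi
          have hi' : i ≤ n := Nat.lt_succ_iff.mp (Finset.mem_range.mp hi)
          have h3 : n - i + 1 = n + 1 - i := by omega
          rw [← h3]; ring
      _ = ∑ i ∈ Finset.range (n + 2), ((n + 1).choose i : ℝ) *
            (iteratedDerivWithin (n + 1 - i) F s x * iteratedDerivWithin i G s x) :=
          (Finset.sum_choose_succ_mul
            (fun i j => iteratedDerivWithin j F s x * iteratedDerivWithin i G s x) n).symm
      _ = _ := by
          apply Finset.sum_congr rfl
          intro i _
          ring

section
variable {d : ℕ} {p0 L : (Fin d → ℝ) → ℝ}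

lemma aux_step {ψ : (Fin d → ℝ) → ℝ} (hp0m : Measurable p0) (hp0 : ∀ x, 0 ≤ p0 x)
    (hLm : Measurable L) (hLpos : ∀ x, 0 < L x) (hL1 : ∀ x, L x ≤ 1) (hψ : Measurable ψ)
    (n : ℕ)
    (h0 : Integrable (fun x => |ψ x * Real.log (L x) ^ n| * p0 x))
    (h1 : Integrable (fun x => |ψ x * Real.log (L x) ^ (n + 1)| * p0 x))
    {t : ℝ} (ht : t ∈ Icc (0:ℝ) 1) :
    HasDerivWithinAt (fun s => ∫ x, ψ x * Real.log (L x) ^ n * L x ^ s * p0 x)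
      (∫ x, ψ x * Real.log (L x) ^ (n + 1) * L x ^ t * p0 x) (Icc 0 1) t := by
  have h1' : Integrable (fun x => |ψ x * Real.log (L x) ^ n * Real.log (L x)| * p0 x) := by
    refine h1.congr (Filter.Eventually.of_forall fun x => ?_)
    congr 1; congr 1; ring
  have hd := aux_deriv (φ := fun x => ψ x * Real.log (L x) ^ n) hp0m hp0 hLm hLpos hL1
    (hψ.mul (hLm.log.pow_const n)) h0 h1' ht
  have he : (fun x => ψ x * Real.log (L x) ^ n * Real.log (L x) * L x ^ t * p0 x)
      = fun x => ψ x * Real.log (L x) ^ (n + 1) * L x ^ t * p0 x := by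
    funext x; ring
  rwa [he] at hd

lemma aux_iter (hp0m : Measurable p0) (hp0 : ∀ x, 0 ≤ p0 x)
    (hLm : Measurable L) (hLpos : ∀ x, 0 < L x) (hL1 : ∀ x, L x ≤ 1) (k : ℕ)
    {ψ : (Fin d → ℝ) → ℝ} (hψ : Measurable ψ)
    (hint : ∀ n ≤ k, Integrable (fun x => |ψ x * Real.log (L x) ^ n| * p0 x)) :
    ∀ n ≤ k, ∀ t ∈ Icc (0:ℝ) 1,
      iteratedDerivWithin n (fun s => ∫ x, ψ x * L x ^ s * p0 x) (Icc 0 1) t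
        = ∫ x, ψ x * Real.log (L x) ^ n * L x ^ t * p0 x := by
  have hU : UniqueDiffOn ℝ (Icc (0:ℝ) 1) := uniqueDiffOn_Icc (by norm_num)
  intro n
  induction n with
  | zero =>
    intro _ t ht
    simp only [iteratedDerivWithin_zero, pow_zero, mul_one]
  | succ n IH =>
    intro hn t ht
    have hn' : n ≤ k := Nat.le_of_succ_le hn
    have hder := aux_step hp0m hp0 hLm hLpos hL1 hψ n (hint n hn') (hint (n + 1) hn) ht
    have heq : ∀ y ∈ Icc (0:ℝ) 1,
        iteratedDerivWithin n (fun s => ∫ x, ψ x * L x ^ s * p0 x) (Icc 0 1) y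
        = ∫ x, ψ x * Real.log (L x) ^ n * L x ^ y * p0 x :=
      fun y hy => IH hn' y hy
    have hmain := hder.congr (fun y hy => heq y hy) (heq t ht)
    rw [iteratedDerivWithin_succ, hmain.derivWithin (hU t ht)]

lemma aux_smooth (hp0m : Measurable p0) (hp0 : ∀ x, 0 ≤ p0 x)
    (hLm : Measurable L) (hLpos : ∀ x, 0 < L x) (hL1 : ∀ x, L x ≤ 1) :
    ∀ (k : ℕ) {ψ : (Fin d → ℝ) → ℝ}, Measurable ψ →
      (∀ n ≤ k, Integrable (fun x => |ψ x * Real.log (L x) ^ n| * p0 x)) →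
      ContDiffOn ℝ k (fun s => ∫ x, ψ x * L x ^ s * p0 x) (Icc (0:ℝ) 1) := by
  have hU : UniqueDiffOn ℝ (Icc (0:ℝ) 1) := uniqueDiffOn_Icc (by norm_num)
  intro k
  induction k with
  | zero =>
    intro ψ hψ hint
    rw [show ((0 : ℕ) : WithTop ℕ∞) = 0 from rfl, contDiffOn_zero]
    refine aux_cont hp0m hp0 hLm hLpos hL1 hψ ?_
    refine (hint 0 le_rfl).congr (Filter.Eventually.of_forall fun x => ?_)
    simp
  | succ k IH =>
    intro ψ hψ hint
    have h0 : Integrable (fun x => |ψ x| * p0 x) := by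
      refine (hint 0 (Nat.zero_le _)).congr (Filter.Eventually.of_forall fun x => ?_)
      simp
    have h1 : Integrable (fun x => |ψ x * Real.log (L x)| * p0 x) := by
      refine (hint 1 (Nat.one_le_iff_ne_zero.mpr (Nat.succ_ne_zero k))).congr
        (Filter.Eventually.of_forall fun x => ?_)
      simp
    rw [show ((k + 1 : ℕ) : WithTop ℕ∞) = (k : WithTop ℕ∞) + 1 by push_cast; rfl,
      contDiffOn_succ_iff_derivWithin hU]
    refine ⟨fun t ht => (aux_deriv hp0m hp0 hLm hLpos hL1 hψ h0 h1 ht).differentiableWithinAt,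
      fun h => absurd h (by simp), ?_⟩
    have hIH := IH (ψ := fun x => ψ x * Real.log (L x)) (hψ.mul hLm.log) (fun n hn => by
      refine (hint (n + 1) (Nat.succ_le_succ hn)).congr
        (Filter.Eventually.of_forall fun x => ?_)
      congr 2; ring)
    refine hIH.congr fun t ht => ?_
    rw [(aux_deriv hp0m hp0 hLm hLpos hL1 hψ h0 h1 ht).derivWithin (hU t ht)]
end

/-- Recurrence relation for derivatives of the tempered expectation
`g(t) = E_{p_t}[f]`: for all `t ∈ [0,1]`,
`E_{p_t}[f ℓ^k] = ∑_{n=0}^k C(k,n) g^{(k−n)}(t) E_{p_t}[ℓ^n]`;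
in particular, for `k = 1`, `g'(t) = E_{p_t}[f ℓ] − E_{p_t}[f] E_{p_t}[ℓ]`. -/
theorem stmt_5 (d k : ℕ) (p0 L f : (Fin d → ℝ) → ℝ)
    (hp0m : Measurable p0) (hp0 : ∀ x, 0 ≤ p0 x) (hp0int : ∫ x, p0 x = 1)
    (hLm : Measurable L) (hLpos : ∀ x, 0 < L x)
    (c : ℝ) (hc : c < 1) (hLb : ∀ x, L x ≤ c)
    (hf : Measurable f)
    (hmomf : ∀ n ≤ k, Integrable (fun x => |f x * (Real.log (L x)) ^ n| * p0 x))
    (hmomℓ : ∀ n ≤ k, Integrable (fun x => |(Real.log (L x)) ^ n| * p0 x))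
    (Z : ℝ → ℝ) (hZ : ∀ t, Z t = ∫ x, p0 x * L x ^ t)
    (p : ℝ → (Fin d → ℝ) → ℝ) (hp : ∀ t x, p t x = p0 x * L x ^ t / Z t)
    (g : ℝ → ℝ) (hg : ∀ t, g t = ∫ x, f x * p t x) :
    (∀ t ∈ Icc (0 : ℝ) 1,
        ∫ x, f x * (Real.log (L x)) ^ k * p t x =
          ∑ n ∈ Finset.range (k + 1), (k.choose n : ℝ) *
            iteratedDerivWithin (k - n) g (Icc 0 1) t * ∫ x, (Real.log (L x)) ^ n * p t x) ∧
      (1 ≤ k → ∀ t ∈ Icc (0 : ℝ) 1,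
        HasDerivWithinAt g
          ((∫ x, f x * Real.log (L x) * p t x) -
            (∫ x, f x * p t x) * ∫ x, Real.log (L x) * p t x) (Icc 0 1) t) := by
  have hL1 : ∀ x, L x ≤ 1 := fun x => (hLb x).trans hc.le
  have hU : UniqueDiffOn ℝ (Icc (0:ℝ) 1) := uniqueDiffOn_Icc (by norm_num)
  have hone : Measurable (fun _ : Fin d → ℝ => (1:ℝ)) := measurable_const
  have hmomℓ' : ∀ n ≤ k,
      Integrable (fun x => |(1:ℝ) * Real.log (L x) ^ n| * p0 x) := fun n hn =>
    (hmomℓ n hn).congr (Filter.Eventually.of_forall fun x => by simp)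
  have hp0i : Integrable p0 := by
    refine (hmomℓ 0 (Nat.zero_le _)).congr (Filter.Eventually.of_forall fun x => by simp)
  -- Z t as an integral of the standard form
  have hZeq : ∀ t : ℝ, Z t = ∫ x, (1:ℝ) * L x ^ t * p0 x := by
    intro t
    rw [hZ t]
    congr 1
    funext x
    ring
  -- positivity of the normalizing constant
  have hps : 0 < volume (Function.support p0) := by
    by_contra h
    push_neg at h
    have h0 : volume (Function.support p0) = 0 := le_antisymm h zero_le
    have hae : ∀ᵐ x, p0 x = 0 := by
      rw [ae_iff]
      simpa [Function.support] using h0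
    have := integral_congr_ae (g := fun _ => (0:ℝ)) hae
    rw [hp0int, integral_zero] at this
    exact one_ne_zero this
  have hDint : ∀ t : ℝ, 0 ≤ t → Integrable (fun x => (1:ℝ) * L x ^ t * p0 x) := by
    intro t ht
    refine aux_int hp0m hp0 hLm hLpos hL1 hone ?_ ht
    exact hp0i.congr (Filter.Eventually.of_forall fun x => by simp)
  have hD : ∀ t ∈ Icc (0:ℝ) 1, 0 < ∫ x, (1:ℝ) * L x ^ t * p0 x := by
    intro t ht
    have hnn : 0 ≤ fun x => (1:ℝ) * L x ^ t * p0 x := fun x => by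
      have := (Real.rpow_pos_of_pos (hLpos x) t).le
      have := hp0 x
      positivity
    rw [integral_pos_iff_support_of_nonneg hnn (hDint t ht.1)]
    have hsupp : Function.support (fun x => (1:ℝ) * L x ^ t * p0 x)
        = Function.support p0 := by
      ext x
      simp [Function.mem_support, mul_eq_zero, (Real.rpow_pos_of_pos (hLpos x) t).ne']
    rwa [hsupp]
  -- g as a ratio
  have hgfun : g = fun t => (∫ x, f x * L x ^ t * p0 x) / ∫ x, (1:ℝ) * L x ^ t * p0 x := by
    funext t
    rw [hg t]
    simp only [hp]
    rw [hZeq t]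
    rw [show (fun x => f x * (p0 x * L x ^ t / ∫ x, (1:ℝ) * L x ^ t * p0 x))
        = fun x => (f x * L x ^ t * p0 x) / ∫ x, (1:ℝ) * L x ^ t * p0 x from
      funext fun x => by ring, integral_div]
  -- iterated derivative formulas
  have hNiter := aux_iter hp0m hp0 hLm hLpos hL1 k hf hmomf
  have hDiter := aux_iter hp0m hp0 hLm hLpos hL1 k hone hmomℓ'
  have hNs := aux_smooth hp0m hp0 hLm hLpos hL1 k hf hmomf
  have hDs := aux_smooth hp0m hp0 hLm hLpos hL1 k hone hmomℓ'
  have hgs : ContDiffOn ℝ k g (Icc (0:ℝ) 1) := by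
    rw [hgfun]
    exact hNs.div hDs fun t ht => (hD t ht).ne'
  -- rewriting the tempered integrals
  have eM : ∀ (n : ℕ) (t : ℝ), ∫ x, Real.log (L x) ^ n * p t x
      = (∫ x, (1:ℝ) * Real.log (L x) ^ n * L x ^ t * p0 x)
        / ∫ x, (1:ℝ) * L x ^ t * p0 x := by
    intro n t
    simp only [hp]
    rw [hZeq t]
    rw [show (fun x => Real.log (L x) ^ n * (p0 x * L x ^ t / ∫ x, (1:ℝ) * L x ^ t * p0 x))
        = fun x => ((1:ℝ) * Real.log (L x) ^ n * L x ^ t * p0 x)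
            / ∫ x, (1:ℝ) * L x ^ t * p0 x from funext fun x => by ring, integral_div]
  have eF : ∀ (n : ℕ) (t : ℝ), ∫ x, f x * Real.log (L x) ^ n * p t x
      = (∫ x, f x * Real.log (L x) ^ n * L x ^ t * p0 x)
        / ∫ x, (1:ℝ) * L x ^ t * p0 x := by
    intro n t
    simp only [hp]
    rw [hZeq t]
    rw [show (fun x => f x * Real.log (L x) ^ n
          * (p0 x * L x ^ t / ∫ x, (1:ℝ) * L x ^ t * p0 x))
        = fun x => (f x * Real.log (L x) ^ n * L x ^ t * p0 x)
            / ∫ x, (1:ℝ) * L x ^ t * p0 x from funext fun x => by ring, integral_div]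
  constructor
  · -- part 1
    intro t ht
    have hEqOn : Set.EqOn (fun s : ℝ => ∫ x, f x * L x ^ s * p0 x)
        (fun y => g y * ∫ x, (1:ℝ) * L x ^ y * p0 x) (Icc 0 1) := by
      intro y hy
      simp only [hgfun]
      rw [div_mul_cancel₀ _ (hD y hy).ne']
    have key : ∫ x, f x * Real.log (L x) ^ k * L x ^ t * p0 x
        = ∑ n ∈ Finset.range (k + 1), (k.choose n : ℝ) *
            iteratedDerivWithin (k - n) g (Icc 0 1) t *
            ∫ x, (1:ℝ) * Real.log (L x) ^ n * L x ^ t * p0 x := by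
      rw [← hNiter k le_rfl t ht]
      rw [iteratedDerivWithin_congr hEqOn ht]
      rw [leibniz_within hU k hgs hDs t ht]
      refine Finset.sum_congr rfl fun n hn => ?_
      rw [hDiter n (Nat.lt_succ_iff.mp (Finset.mem_range.mp hn)) t ht]
    calc ∫ x, f x * Real.log (L x) ^ k * p t x
        = (∫ x, f x * Real.log (L x) ^ k * L x ^ t * p0 x)
            / ∫ x, (1:ℝ) * L x ^ t * p0 x := eF k t
      _ = (∑ n ∈ Finset.range (k + 1), (k.choose n : ℝ) *
            iteratedDerivWithin (k - n) g (Icc 0 1) t *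
            ∫ x, (1:ℝ) * Real.log (L x) ^ n * L x ^ t * p0 x)
            / ∫ x, (1:ℝ) * L x ^ t * p0 x := by rw [key]
      _ = _ := by
          rw [Finset.sum_div]
          refine Finset.sum_congr rfl fun n _ => ?_
          rw [eM n t]
          ring
  · -- part 2
    intro hk t ht
    have h0f : Integrable (fun x => |f x| * p0 x) :=
      (hmomf 0 (Nat.zero_le _)).congr (Filter.Eventually.of_forall fun x => by simp)
    have h1f : Integrable (fun x => |f x * Real.log (L x)| * p0 x) :=
      (hmomf 1 hk).congr (Filter.Eventually.of_forall fun x => by simp)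
    have h0o : Integrable (fun x => |(1:ℝ)| * p0 x) :=
      hp0i.congr (Filter.Eventually.of_forall fun x => by simp)
    have h1o : Integrable (fun x => |(1:ℝ) * Real.log (L x)| * p0 x) :=
      (hmomℓ 1 hk).congr (Filter.Eventually.of_forall fun x => by simp)
    have hdN := aux_deriv hp0m hp0 hLm hLpos hL1 hf h0f h1f ht
    have hdD := aux_deriv hp0m hp0 hLm hLpos hL1 hone h0o h1o ht
    have hdg := hdN.div hdD ((hD t ht).ne')
    rw [hgfun]
    have e1 : ∫ x, f x * Real.log (L x) * p t x
        = (∫ x, f x * Real.log (L x) * L x ^ t * p0 x)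
          / ∫ x, (1:ℝ) * L x ^ t * p0 x := by
      have := eF 1 t
      simpa [pow_one] using this
    have e2 : ∫ x, f x * p t x
        = (∫ x, f x * L x ^ t * p0 x) / ∫ x, (1:ℝ) * L x ^ t * p0 x := by
      have := eF 0 t
      simpa [pow_zero] using this
    have e3 : ∫ x, Real.log (L x) * p t x
        = (∫ x, (1:ℝ) * Real.log (L x) * L x ^ t * p0 x)
          / ∫ x, (1:ℝ) * L x ^ t * p0 x := by
      have := eM 1 t
      simpa [pow_one] using this
    rw [e1, e2, e3]
    have hne : (∫ x, (1:ℝ) * L x ^ t * p0 x) ≠ 0 := (hD t ht).ne'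
    refine hdg.congr_deriv ?_
    simp only [one_mul] at hne ⊢
    field_simp [hne]
end

section
/- If there exist C_1, C_2 > 0 and m ∈ ℕ with |f| ≤ C_1 + C_2 |ℓ|^m (growth condition), and ∫ p_0(x) L(x)^{−ε} dx < ∞ for some ε > 0 (informative prior condition), then the tempered expectation map g(t) = E_{p_t}[f] is real analytic on [0,1]. -/
open MeasureTheory Set
open scoped Nat

lemma aux_exp_bound (δ : ℝ) (hδ : 0 < δ) (k : ℕ) {u : ℝ} (hu : u ≤ 0) :
    |u| ^ k * Real.exp (δ * u) ≤ (k ! : ℝ) * (2 / δ) ^ k := by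
  have h1 : ((δ / 2) * |u|) ^ k / k ! ≤ Real.exp ((δ / 2) * |u|) :=
    Real.pow_div_factorial_le_exp (x := (δ / 2) * |u|) (by positivity) k
  have h2 : ((δ / 2) * |u|) ^ k ≤ (k ! : ℝ) * Real.exp ((δ / 2) * |u|) := by
    rw [div_le_iff₀ (by positivity : (0:ℝ) < (k ! : ℝ))] at h1
    linarith
  have h3 : |u| ^ k = ((δ / 2) * |u|) ^ k * (2 / δ) ^ k := by
    rw [← mul_pow]
    congr 1
    field_simp
  have h4 : Real.exp ((δ / 2) * |u|) * Real.exp (δ * u) ≤ 1 := by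
    rw [← Real.exp_add, Real.exp_le_one_iff, abs_of_nonpos hu]
    nlinarith
  have hk : (0:ℝ) ≤ (k ! : ℝ) * (2 / δ) ^ k := by positivity
  calc |u| ^ k * Real.exp (δ * u)
      = ((δ / 2) * |u|) ^ k * (2 / δ) ^ k * Real.exp (δ * u) := by rw [h3]
    _ ≤ ((k ! : ℝ) * Real.exp ((δ / 2) * |u|)) * (2 / δ) ^ k * Real.exp (δ * u) := by
        exact mul_le_mul_of_nonneg_right (mul_le_mul_of_nonneg_right h2 (by positivity))
          (Real.exp_pos _).le
    _ = ((k ! : ℝ) * (2 / δ) ^ k) * (Real.exp ((δ / 2) * |u|) * Real.exp (δ * u)) := by ring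
    _ ≤ ((k ! : ℝ) * (2 / δ) ^ k) * 1 := by gcongr
    _ = (k ! : ℝ) * (2 / δ) ^ k := mul_one _

lemma measurable_rpow_cst {α : Type*} [MeasurableSpace α] {L : α → ℝ}
    (hLm : Measurable L) (hLpos : ∀ x, 0 < L x) (s : ℝ) :
    Measurable (fun x => L x ^ s) := by
  have : (fun x => L x ^ s) = fun x => Real.exp (Real.log (L x) * s) :=
    funext fun x => Real.rpow_def_of_pos (hLpos x) s
  rw [this]
  exact Real.measurable_exp.comp (hLm.log.mul_const s)

lemma integrable_key {d : ℕ} {p0 L : (Fin d → ℝ) → ℝ}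
    (hp0m : Measurable p0) (hp0 : ∀ x, 0 ≤ p0 x)
    (hLm : Measurable L) (hLpos : ∀ x, 0 < L x) (hL1 : ∀ x, L x ≤ 1)
    {ε : ℝ} (hε : 0 < ε)
    (hinfo : Integrable (fun x => p0 x * L x ^ (-ε)))
    (s : ℝ) (hs : -ε < s) (k : ℕ) :
    Integrable (fun x => p0 x * L x ^ s * |Real.log (L x)| ^ k) := by
  set δ : ℝ := s + ε with hδdef
  have hδ : 0 < δ := by simp only [hδdef]; linarith
  have hmeas : Measurable (fun x => p0 x * L x ^ s * |Real.log (L x)| ^ k) :=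
    ((hp0m.mul (measurable_rpow_cst hLm hLpos s)).mul ((hLm.log.abs).pow_const k))
  refine Integrable.mono' (hinfo.const_mul ((k ! : ℝ) * (2 / δ) ^ k))
    hmeas.aestronglyMeasurable ?_
  filter_upwards with x
  have hu : Real.log (L x) ≤ 0 := Real.log_nonpos (hLpos x).le (hL1 x)
  have h1 : L x ^ s = L x ^ (-ε) * Real.exp (δ * Real.log (L x)) := by
    rw [Real.rpow_def_of_pos (hLpos x), Real.rpow_def_of_pos (hLpos x), ← Real.exp_add]
    congr 1
    simp only [hδdef]; ring
  have hnn : 0 ≤ p0 x * L x ^ s * |Real.log (L x)| ^ k :=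
    mul_nonneg (mul_nonneg (hp0 x) (Real.rpow_nonneg (hLpos x).le _))
      (pow_nonneg (abs_nonneg _) _)
  rw [Real.norm_eq_abs, abs_of_nonneg hnn, h1]
  have key := aux_exp_bound δ hδ k hu
  calc p0 x * (L x ^ (-ε) * Real.exp (δ * Real.log (L x))) * |Real.log (L x)| ^ k
      = (|Real.log (L x)| ^ k * Real.exp (δ * Real.log (L x))) * (p0 x * L x ^ (-ε)) := by ring
    _ ≤ ((k ! : ℝ) * (2 / δ) ^ k) * (p0 x * L x ^ (-ε)) :=
        mul_le_mul_of_nonneg_right key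
          (mul_nonneg (hp0 x) (Real.rpow_nonneg (hLpos x).le _))

lemma analyticAt_of_eq_tsum (F : ℝ → ℝ) (c : ℕ → ℝ) (t₀ r : ℝ) (hr : 0 < r)
    (hc : Summable fun n => |c n| * r ^ n)
    (hF : ∀ t, |t - t₀| < r → F t = ∑' n, c n * (t - t₀) ^ n) :
    AnalyticAt ℝ F t₀ := by
  set q := FormalMultilinearSeries.ofScalars ℝ c with hq
  have hrad : (r.toNNReal : ENNReal) ≤ q.radius := by
    apply q.le_radius_of_summable_norm
    have : (fun n => ‖q n‖ * (r.toNNReal : ℝ) ^ n) = fun n => |c n| * r ^ n := by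
      funext n
      rw [hq, FormalMultilinearSeries.ofScalars_norm, Real.coe_toNNReal _ hr.le,
        Real.norm_eq_abs]
    rw [this]
    exact hc
  have hradpos : 0 < q.radius :=
    lt_of_lt_of_le (by simpa using hr) hrad
  have hsumAn : AnalyticAt ℝ q.sum 0 :=
    (q.hasFPowerSeriesOnBall hradpos).analyticAt
  have h0 : AnalyticAt ℝ q.sum (t₀ - t₀) := by rwa [sub_self]
  have hin : AnalyticAt ℝ (fun t : ℝ => t - t₀) t₀ := analyticAt_id.sub analyticAt_const
  have h2 : AnalyticAt ℝ (fun t => q.sum (t - t₀)) t₀ := by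
    have := AnalyticAt.comp (f := fun t : ℝ => t - t₀) h0 hin
    exact this
  apply h2.congr
  filter_upwards [Metric.ball_mem_nhds t₀ hr] with t ht
  rw [Metric.mem_ball, Real.dist_eq] at ht
  have : q.sum (t - t₀) = ∑' n, c n * (t - t₀) ^ n := by
    have := FormalMultilinearSeries.ofScalars_sum_eq c (t - t₀)
    simpa [smul_eq_mul, FormalMultilinearSeries.ofScalarsSum] using this
  rw [this, ← hF t ht]

lemma analyticAt_weighted {d : ℕ} {p0 L w : (Fin d → ℝ) → ℝ}
    (hp0m : Measurable p0) (hp0 : ∀ x, 0 ≤ p0 x)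
    (hLm : Measurable L) (hLpos : ∀ x, 0 < L x) (hL1 : ∀ x, L x ≤ 1)
    (hw : Measurable w)
    {ε : ℝ} (hε : 0 < ε)
    (hinfo : Integrable (fun x => p0 x * L x ^ (-ε)))
    {C₁ C₂ : ℝ} {m : ℕ} (hC₁ : 0 ≤ C₁) (hC₂ : 0 ≤ C₂)
    (hwb : ∀ x, |w x| ≤ C₁ + C₂ * |Real.log (L x)| ^ m)
    {t₀ : ℝ} (ht₀ : t₀ ∈ Icc (0:ℝ) 1) :
    AnalyticAt ℝ (fun t => ∫ x, w x * p0 x * L x ^ t) t₀ := by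
  obtain ⟨ht₀0, ht₀1⟩ := ht₀
  set r : ℝ := ε / 2 with hrdef
  have hr : 0 < r := by positivity
  set W : ℕ → (Fin d → ℝ) → ℝ :=
    fun n x => w x * p0 x * L x ^ t₀ * Real.log (L x) ^ n with hWdef
  have hWm : ∀ n, Measurable (W n) := fun n =>
    ((hw.mul hp0m).mul (measurable_rpow_cst hLm hLpos t₀)).mul (hLm.log.pow_const n)
  have hWnorm : ∀ n x, ‖W n x‖ = |w x| * (p0 x * L x ^ t₀ * |Real.log (L x)| ^ n) := by
    intro n x
    rw [hWdef]
    simp only [Real.norm_eq_abs, abs_mul, abs_pow, abs_of_nonneg (hp0 x),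
      abs_of_nonneg (Real.rpow_nonneg (hLpos x).le t₀)]
    ring
  have hWb : ∀ n x, ‖W n x‖ ≤
      C₁ * (p0 x * L x ^ t₀ * |Real.log (L x)| ^ n) +
      C₂ * (p0 x * L x ^ t₀ * |Real.log (L x)| ^ (n + m)) := by
    intro n x
    rw [hWnorm n x]
    have hnn : 0 ≤ p0 x * L x ^ t₀ * |Real.log (L x)| ^ n :=
      mul_nonneg (mul_nonneg (hp0 x) (Real.rpow_nonneg (hLpos x).le _))
        (pow_nonneg (abs_nonneg _) _)
    calc |w x| * (p0 x * L x ^ t₀ * |Real.log (L x)| ^ n)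
        ≤ (C₁ + C₂ * |Real.log (L x)| ^ m) * (p0 x * L x ^ t₀ * |Real.log (L x)| ^ n) :=
          mul_le_mul_of_nonneg_right (hwb x) hnn
      _ = C₁ * (p0 x * L x ^ t₀ * |Real.log (L x)| ^ n) +
          C₂ * (p0 x * L x ^ t₀ * |Real.log (L x)| ^ (n + m)) := by
          rw [pow_add]; ring
  have ht₀ε : -ε < t₀ := by linarith
  have hWint : ∀ n, Integrable (W n) := by
    intro n
    refine Integrable.mono'
      (((integrable_key hp0m hp0 hLm hLpos hL1 hε hinfo t₀ ht₀ε n).const_mul C₁).add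
        ((integrable_key hp0m hp0 hLm hLpos hL1 hε hinfo t₀ ht₀ε (n + m)).const_mul C₂))
      (hWm n).aestronglyMeasurable ?_
    filter_upwards with x
    exact hWb n x
  -- central summability
  have hRint : Integrable (fun x =>
      C₁ * (p0 x * L x ^ (t₀ - r) * |Real.log (L x)| ^ 0) +
      C₂ * (p0 x * L x ^ (t₀ - r) * |Real.log (L x)| ^ m)) :=
    ((integrable_key hp0m hp0 hLm hLpos hL1 hε hinfo (t₀ - r) (by
        rw [hrdef]; linarith) 0).const_mul C₁).add
      ((integrable_key hp0m hp0 hLm hLpos hL1 hε hinfo (t₀ - r) (by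
        rw [hrdef]; linarith) m).const_mul C₂)
  have hS : Summable (fun n => (∫ x, ‖W n x‖) * (r ^ n / n !)) := by
    apply summable_of_sum_range_le (c := ∫ x,
      C₁ * (p0 x * L x ^ (t₀ - r) * |Real.log (L x)| ^ 0) +
      C₂ * (p0 x * L x ^ (t₀ - r) * |Real.log (L x)| ^ m))
    · intro n
      exact mul_nonneg (integral_nonneg fun x => norm_nonneg _) (by positivity)
    · intro N
      have step1 : ∑ n ∈ Finset.range N, (∫ x, ‖W n x‖) * (r ^ n / n !)
          = ∫ x, ∑ n ∈ Finset.range N, ‖W n x‖ * (r ^ n / n !) := by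
        rw [integral_finset_sum _ (fun n _ => ((hWint n).norm.mul_const _))]
        exact Finset.sum_congr rfl fun n _ => (integral_mul_const _ _).symm
      rw [step1]
      apply integral_mono (integrable_finset_sum _ (fun n _ => ((hWint n).norm.mul_const _)))
        hRint
      intro x
      have hu : Real.log (L x) ≤ 0 := Real.log_nonpos (hLpos x).le (hL1 x)
      have e1 : ∀ n, ‖W n x‖ * (r ^ n / n !)
          = (|w x| * (p0 x * L x ^ t₀)) * ((r * |Real.log (L x)|) ^ n / n !) := by
        intro n
        rw [hWnorm n x, mul_pow]
        ring
      have e3 : Real.exp (r * |Real.log (L x)|) = L x ^ (-r) := by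
        have harg : r * |Real.log (L x)| = Real.log (L x) * (-r) := by
          rw [abs_of_nonpos hu]; ring
        rw [harg]
        exact (Real.rpow_def_of_pos (hLpos x) (-r)).symm
      have hLsplit : L x ^ (t₀ - r) = L x ^ t₀ * L x ^ (-r) := by
        rw [sub_eq_add_neg, Real.rpow_add (hLpos x)]
      calc ∑ n ∈ Finset.range N, ‖W n x‖ * (r ^ n / n !)
          = (|w x| * (p0 x * L x ^ t₀)) *
            ∑ n ∈ Finset.range N, (r * |Real.log (L x)|) ^ n / n ! := by
            rw [Finset.mul_sum]
            exact Finset.sum_congr rfl fun n _ => e1 n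
        _ ≤ (|w x| * (p0 x * L x ^ t₀)) * Real.exp (r * |Real.log (L x)|) := by
            apply mul_le_mul_of_nonneg_left
              (Real.sum_le_exp_of_nonneg (by positivity) N)
            exact mul_nonneg (abs_nonneg _)
              (mul_nonneg (hp0 x) (Real.rpow_nonneg (hLpos x).le _))
        _ ≤ ((C₁ + C₂ * |Real.log (L x)| ^ m) * (p0 x * L x ^ t₀)) *
              Real.exp (r * |Real.log (L x)|) := by
            apply mul_le_mul_of_nonneg_right
              (mul_le_mul_of_nonneg_right (hwb x)
                (mul_nonneg (hp0 x) (Real.rpow_nonneg (hLpos x).le _)))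
            exact (Real.exp_pos _).le
        _ = C₁ * (p0 x * L x ^ (t₀ - r) * |Real.log (L x)| ^ 0) +
            C₂ * (p0 x * L x ^ (t₀ - r) * |Real.log (L x)| ^ m) := by
            rw [e3, hLsplit]
            ring
  set c : ℕ → ℝ := fun n => (∫ x, W n x) / n ! with hcdef
  have hcb : ∀ n, |c n| * r ^ n ≤ (∫ x, ‖W n x‖) * (r ^ n / n !) := by
    intro n
    have h1 : |∫ x, W n x| ≤ ∫ x, ‖W n x‖ := by
      simpa [Real.norm_eq_abs] using norm_integral_le_integral_norm (μ := volume) (W n)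
    rw [hcdef]
    simp only [abs_div, Nat.abs_cast]
    rw [div_mul_eq_mul_div, mul_div_assoc]
    exact mul_le_mul_of_nonneg_right h1 (by positivity)
  have hcsum : Summable fun n => |c n| * r ^ n :=
    Summable.of_nonneg_of_le (fun n => by positivity) hcb hS
  apply analyticAt_of_eq_tsum _ c t₀ r hr hcsum
  intro t ht
  set F : ℕ → (Fin d → ℝ) → ℝ := fun n x => W n x * ((t - t₀) ^ n / n !) with hFdef
  have hFint : ∀ n, Integrable (F n) := fun n => (hWint n).mul_const _
  have hFnormint : ∀ n, (∫ x, ‖F n x‖) = (∫ x, ‖W n x‖) * (|t - t₀| ^ n / n !) := by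
    intro n
    rw [← integral_mul_const]
    congr 1
    funext x
    rw [hFdef]
    simp only [norm_mul, Real.norm_eq_abs, abs_div, abs_pow, Nat.abs_cast]
  have hFsum : Summable fun n => ∫ x, ‖F n x‖ := by
    apply Summable.of_nonneg_of_le (fun n => integral_nonneg fun x => norm_nonneg _) _ hS
    intro n
    rw [hFnormint n]
    apply mul_le_mul_of_nonneg_left _ (integral_nonneg fun x => norm_nonneg _)
    apply div_le_div_of_nonneg_right _ (by positivity)
    · exact pow_le_pow_left₀ (abs_nonneg _) ht.le n
  have key := hasSum_integral_of_summable_integral_norm (μ := volume) hFint hFsum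
  have hps : ∀ x, HasSum (fun n => F n x) (w x * p0 x * L x ^ t) := by
    intro x
    have he := NormedSpace.exp_series_hasSum_exp' (𝕂 := ℝ)
      ((t - t₀) * Real.log (L x))
    have he' : HasSum (fun n => ((n !:ℝ))⁻¹ • ((t - t₀) * Real.log (L x)) ^ n)
        (Real.exp ((t - t₀) * Real.log (L x))) := by
      rwa [Real.exp_eq_exp_ℝ]
    have ha := he'.mul_left (w x * p0 x * L x ^ t₀)
    have hfeq : (fun n => (w x * p0 x * L x ^ t₀) *
        (((n !:ℝ))⁻¹ • ((t - t₀) * Real.log (L x)) ^ n)) = fun n => F n x := by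
      funext n
      rw [hFdef, hWdef]
      simp only [smul_eq_mul, mul_pow]
      ring
    rw [hfeq] at ha
    have hval : (w x * p0 x * L x ^ t₀) * Real.exp ((t - t₀) * Real.log (L x))
        = w x * p0 x * L x ^ t := by
      have hmul : Real.exp (Real.log (L x) * t₀) * Real.exp ((t - t₀) * Real.log (L x))
          = Real.exp (Real.log (L x) * t) := by
        rw [← Real.exp_add]; congr 1; ring
      rw [Real.rpow_def_of_pos (hLpos x) t, Real.rpow_def_of_pos (hLpos x) t₀,
        mul_assoc, hmul]
    rwa [hval] at ha
  have hpt : (fun x => ∑' n, F n x) = fun x => w x * p0 x * L x ^ t :=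
    funext fun x => (hps x).tsum_eq
  rw [hpt] at key
  rw [← key.tsum_eq]
  apply tsum_congr
  intro n
  rw [hFdef]
  simp only
  rw [integral_mul_const, hcdef]
  ring

/-- Sufficient conditions: under the growth condition `|f| ≤ C₁ + C₂|ℓ|^m` and the
informative prior condition `∫ p₀ L^{−ε} < ∞`, the tempered expectation
`g(t) = E_{p_t}[f]` is real analytic on `[0,1]`. -/
theorem stmt_9 (d : ℕ) (p0 L f : (Fin d → ℝ) → ℝ)
    (hp0m : Measurable p0) (hp0 : ∀ x, 0 ≤ p0 x) (hp0int : ∫ x, p0 x = 1)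
    (hLm : Measurable L) (hLpos : ∀ x, 0 < L x)
    (c : ℝ) (hc : c < 1) (hLb : ∀ x, L x ≤ c)
    (hf : Measurable f)
    (C₁ C₂ : ℝ) (hC₁ : 0 < C₁) (hC₂ : 0 < C₂) (m : ℕ)
    (hgrowth : ∀ x, |f x| ≤ C₁ + C₂ * |Real.log (L x)| ^ m)
    (ε : ℝ) (hε : 0 < ε)
    (hinfo : Integrable (fun x => p0 x * L x ^ (-ε)))
    (Z : ℝ → ℝ) (hZ : ∀ t, Z t = ∫ x, p0 x * L x ^ t)
    (p : ℝ → (Fin d → ℝ) → ℝ) (hp : ∀ t x, p t x = p0 x * L x ^ t / Z t)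
    (g : ℝ → ℝ) (hg : ∀ t, g t = ∫ x, f x * p t x) :
    AnalyticOn ℝ g (Icc 0 1) := by
  have hL1 : ∀ x, L x ≤ 1 := fun x => (hLb x).trans hc.le
  -- Z is positive on [0,1]
  have hZpos : ∀ t ∈ Icc (0:ℝ) 1, 0 < Z t := by
    intro t ht
    rw [hZ]
    have hint : Integrable (fun x => p0 x * L x ^ t) := by
      have := integrable_key hp0m hp0 hLm hLpos hL1 hε hinfo t (by linarith [ht.1]) 0
      simpa using this
    have hnn : ∀ x, 0 ≤ p0 x * L x ^ t :=
      fun x => mul_nonneg (hp0 x) (Real.rpow_nonneg (hLpos x).le _)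
    rcases (integral_nonneg (f := fun x => p0 x * L x ^ t) hnn).lt_or_eq with h | h
    · exact h
    · exfalso
      have hzero : (fun x => p0 x * L x ^ t) =ᵐ[volume] 0 :=
        (integral_eq_zero_iff_of_nonneg hnn hint).mp h.symm
      have hp00 : p0 =ᵐ[volume] 0 := by
        filter_upwards [hzero] with x hx
        have hLne : L x ^ t ≠ 0 := (Real.rpow_pos_of_pos (hLpos x) t).ne'
        simpa [hLne] using hx
      have : ∫ x, p0 x = 0 := by
        rw [integral_congr_ae hp00]
        simp
      rw [hp0int] at this
      norm_num at this
  -- g t = N t / Z t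
  have hgeq : g = fun t => (∫ x, f x * p0 x * L x ^ t) / Z t := by
    funext t
    rw [hg]
    have : (fun x => f x * p t x) = fun x => (f x * p0 x * L x ^ t) / Z t := by
      funext x
      rw [hp]
      ring
    rw [this, integral_div]
  have hN : ∀ t₀ ∈ Icc (0:ℝ) 1,
      AnalyticAt ℝ (fun t => ∫ x, f x * p0 x * L x ^ t) t₀ := fun t₀ ht₀ =>
    analyticAt_weighted hp0m hp0 hLm hLpos hL1 hf hε hinfo hC₁.le hC₂.le hgrowth ht₀
  have hZana : ∀ t₀ ∈ Icc (0:ℝ) 1, AnalyticAt ℝ Z t₀ := by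
    intro t₀ ht₀
    have h1 : AnalyticAt ℝ (fun t => ∫ x, (fun _ : Fin d → ℝ => (1:ℝ)) x * p0 x * L x ^ t) t₀ :=
      analyticAt_weighted (C₁ := 1) (C₂ := C₂) (m := m)
        hp0m hp0 hLm hLpos hL1 measurable_const hε hinfo
        zero_le_one hC₂.le
        (fun x => by
          have : (0:ℝ) ≤ C₂ * |Real.log (L x)| ^ m :=
            mul_nonneg hC₂.le (pow_nonneg (abs_nonneg _) _)
          simp only [abs_one]
          linarith) ht₀
    have : (fun t => ∫ x, (fun _ : Fin d → ℝ => (1:ℝ)) x * p0 x * L x ^ t) = Z := by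
      funext t
      rw [hZ]
      simp
    rwa [this] at h1
  apply AnalyticOnNhd.analyticOn
  intro t₀ ht₀
  rw [hgeq]
  exact (hN t₀ ht₀).div (hZana t₀ ht₀) (hZpos t₀ ht₀).ne'
end

section
/- If the informative prior condition ∫ p_0(x) L(x)^{−ε} dx < ∞ holds for some ε > 0, then the map t ↦ log Z_t, where Z_t = ∫ p_0(x) L(x)^t dx, is real analytic on [0,1], and its derivative equals E_{p_t}[log L]. -/
open MeasureTheory Set

lemma analyticAt_rlog {y : ℝ} (hy : 0 < y) : AnalyticAt ℝ Real.log y := by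
  have h1 : AnalyticAt ℂ Complex.log (y : ℂ) :=
    analyticAt_clog (Complex.ofReal_mem_slitPlane.2 hy)
  have h2 : AnalyticAt ℝ (fun t : ℝ => (Complex.log (t : ℂ)).re) y :=
    (Complex.reCLM.analyticAt _).comp ((h1.restrictScalars).comp (Complex.ofRealCLM.analyticAt _))
  have : Real.log = fun t : ℝ => (Complex.log (t : ℂ)).re :=
    funext fun t => (Complex.log_ofReal_re t).symm
  rw [this]; exact h2

lemma abs_log_le {l δ : ℝ} (hl : 0 < l) (hl1 : l ≤ 1) (hδ : 0 < δ) :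
    |Real.log l| ≤ l ^ (-δ) / δ := by
  have hlog : Real.log l ≤ 0 := Real.log_nonpos hl.le hl1
  rw [abs_of_nonpos hlog, le_div_iff₀ hδ]
  have h1 : δ * (-Real.log l) ≤ Real.exp (δ * (-Real.log l)) :=
    (Real.add_one_le_exp _).trans' (by linarith)
  calc -Real.log l * δ = δ * (-Real.log l) := by ring
    _ ≤ Real.exp (δ * (-Real.log l)) := h1
    _ = l ^ (-δ) := by rw [Real.rpow_def_of_pos hl]; ring_nf

/-- Under the informative prior condition, `t ↦ log Z_t` is real analytic on `[0,1]`
with derivative `E_{p_t}[log L]`. -/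
theorem stmt_14 (d : ℕ) (p0 L : (Fin d → ℝ) → ℝ)
    (hp0m : Measurable p0) (hp0 : ∀ x, 0 ≤ p0 x) (hp0int : ∫ x, p0 x = 1)
    (hLm : Measurable L) (hLpos : ∀ x, 0 < L x)
    (c : ℝ) (hc : c < 1) (hLb : ∀ x, L x ≤ c)
    (ε : ℝ) (hε : 0 < ε)
    (hinfo : Integrable (fun x => p0 x * L x ^ (-ε)))
    (Z : ℝ → ℝ) (hZ : ∀ t, Z t = ∫ x, p0 x * L x ^ t) :
    AnalyticOn ℝ (fun t => Real.log (Z t)) (Icc 0 1) ∧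
      ∀ t ∈ Icc (0 : ℝ) 1,
        HasDerivWithinAt (fun s => Real.log (Z s))
          (∫ x, Real.log (L x) * (p0 x * L x ^ t / Z t)) (Icc 0 1) t := by
  have hL1 : ∀ x, L x ≤ 1 := fun x => (hLb x).trans hc.le
  -- rpow monotonicity in exponent for base ≤ 1
  have hmono : ∀ (x) {s t : ℝ}, s ≤ t → L x ^ t ≤ L x ^ s := fun x s t hst =>
    Real.rpow_le_rpow_of_exponent_ge (hLpos x) (hL1 x) hst
  -- integrability of p0 * L^t for -ε ≤ t
  have hmeas : ∀ t : ℝ, AEStronglyMeasurable (fun x => p0 x * L x ^ t) volume := fun t =>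
    (hp0m.mul (hLm.pow_const t)).aestronglyMeasurable
  have hint : ∀ t : ℝ, -ε ≤ t → Integrable (fun x => p0 x * L x ^ t) := by
    intro t ht
    refine hinfo.mono (hmeas t) (Filter.Eventually.of_forall fun x => ?_)
    rw [Real.norm_eq_abs, Real.norm_eq_abs,
      abs_of_nonneg (mul_nonneg (hp0 x) (Real.rpow_pos_of_pos (hLpos x) _).le),
      abs_of_nonneg (mul_nonneg (hp0 x) (Real.rpow_pos_of_pos (hLpos x) _).le)]
    exact mul_le_mul_of_nonneg_left (hmono x ht) (hp0 x)
  have hp0i : Integrable p0 := by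
    by_contra h
    rw [integral_undef h] at hp0int; norm_num at hp0int
  -- positivity of Z
  have hsupp : 0 < volume (Function.support p0) := by
    have := (integral_pos_iff_support_of_nonneg hp0 hp0i).1 (by rw [hp0int]; norm_num)
    exact this
  have hZpos : ∀ t : ℝ, -ε ≤ t → 0 < Z t := by
    intro t ht
    rw [hZ t]
    refine (integral_pos_iff_support_of_nonneg
      (fun x => mul_nonneg (hp0 x) (Real.rpow_pos_of_pos (hLpos x) _).le) (hint t ht)).2 ?_
    have : Function.support (fun x => p0 x * L x ^ t) = Function.support p0 := by
      ext x
      simp only [Function.mem_support, mul_ne_zero_iff]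
      exact ⟨fun h => h.1, fun h => ⟨h, (Real.rpow_pos_of_pos (hLpos x) t).ne'⟩⟩
    rwa [this]
  -- derivative of Z at t₀ ∈ [0,1]
  have hZderiv : ∀ t₀ ∈ Icc (0:ℝ) 1,
      HasDerivAt Z (∫ x, p0 x * L x ^ t₀ * Real.log (L x)) t₀ := by
    intro t₀ ht₀
    have key := hasDerivAt_integral_of_dominated_loc_of_deriv_le (μ := volume)
      (F := fun (t : ℝ) x => p0 x * L x ^ t)
      (F' := fun (t : ℝ) x => p0 x * L x ^ t * Real.log (L x))
      (bound := fun x => p0 x * L x ^ (-ε) * (2 / ε))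
      (x₀ := t₀) (Metric.ball_mem_nhds t₀ (half_pos hε))
      (Filter.Eventually.of_forall fun t => hmeas t)
      (hint t₀ (le_trans (by linarith) ht₀.1))
      (((hp0m.mul (hLm.pow_const t₀)).mul (hLm.log)).aestronglyMeasurable)
      ?_ (hinfo.mul_const _) ?_
    · have hZfun : Z = fun t => ∫ x, p0 x * L x ^ t := funext hZ
      rw [hZfun]
      exact key.2
    · refine Filter.Eventually.of_forall fun x => fun t ht => ?_
      have htlb : -(ε/2) ≤ t := by
        have := Metric.mem_ball.1 ht
        rw [Real.dist_eq, abs_lt] at this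
        linarith [ht₀.1]
      have h1 : L x ^ t ≤ L x ^ (-(ε/2)) := hmono x htlb
      have h2 : |Real.log (L x)| ≤ L x ^ (-(ε/2)) / (ε/2) :=
        abs_log_le (hLpos x) (hL1 x) (half_pos hε)
      rw [Real.norm_eq_abs, abs_mul, abs_mul,
        abs_of_nonneg (hp0 x), abs_of_nonneg (Real.rpow_pos_of_pos (hLpos x) _).le]
      calc p0 x * L x ^ t * |Real.log (L x)|
          ≤ p0 x * L x ^ (-(ε/2)) * (L x ^ (-(ε/2)) / (ε/2)) := by
            refine mul_le_mul (mul_le_mul_of_nonneg_left h1 (hp0 x)) h2 (abs_nonneg _) ?_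
            exact mul_nonneg (hp0 x) (Real.rpow_pos_of_pos (hLpos x) _).le
        _ = p0 x * L x ^ (-ε) * (2 / ε) := by
            have hh : L x ^ (-(ε/2)) * L x ^ (-(ε/2)) = L x ^ (-ε) := by
              rw [← Real.rpow_add (hLpos x)]; congr 1; ring
            have hε' : (ε:ℝ) ≠ 0 := hε.ne'
            rw [← hh]; field_simp
    · refine Filter.Eventually.of_forall fun x => fun t ht => ?_
      have := ((Real.hasStrictDerivAt_const_rpow (hLpos x) t).hasDerivAt).const_mul (p0 x)
      refine this.congr_deriv ?_
      ring
  -- the complex extension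
  set F : ℂ → ℂ := fun z => ∫ x, (p0 x : ℂ) * Complex.exp (z * (Real.log (L x) : ℂ)) with hF
  have hexp : ∀ (z : ℂ) (x), ‖Complex.exp (z * (Real.log (L x) : ℂ))‖ = L x ^ z.re := by
    intro z x
    rw [Complex.norm_exp]
    have : (z * (Real.log (L x) : ℂ)).re = z.re * Real.log (L x) := by
      simp [Complex.mul_re]
    rw [this, Real.rpow_def_of_pos (hLpos x), mul_comm]
  have hnorm : ∀ (z : ℂ) (x), ‖(p0 x : ℂ) * Complex.exp (z * (Real.log (L x) : ℂ))‖
      = p0 x * L x ^ z.re := by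
    intro z x
    rw [norm_mul, hexp, Complex.norm_real, Real.norm_eq_abs, abs_of_nonneg (hp0 x)]
  have hFdiff : ∀ z₀ : ℂ, -ε < z₀.re → DifferentiableAt ℂ F z₀ := by
    intro z₀ hz₀
    set r : ℝ := (z₀.re + ε) / 2 with hr
    have hrpos : 0 < r := by rw [hr]; linarith
    set m : ℝ := (z₀.re - ε) / 2 with hm
    have hmε : -ε ≤ m := by rw [hm]; linarith
    have key := hasDerivAt_integral_of_dominated_loc_of_deriv_le (μ := volume) (𝕜 := ℂ)
      (F := fun (z : ℂ) x => (p0 x : ℂ) * Complex.exp (z * (Real.log (L x) : ℂ)))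
      (F' := fun (z : ℂ) x => (p0 x : ℂ) * (Real.log (L x) : ℂ)
        * Complex.exp (z * (Real.log (L x) : ℂ)))
      (bound := fun x => p0 x * L x ^ (-ε) / r)
      (x₀ := z₀) (Metric.ball_mem_nhds z₀ hrpos) ?_ ?_ ?_ ?_ (hinfo.div_const _) ?_
    · exact key.2.differentiableAt
    · refine Filter.Eventually.of_forall fun z => ?_
      apply Measurable.aestronglyMeasurable
      exact (Complex.measurable_ofReal.comp hp0m).mul
        ((Complex.measurable_ofReal.comp (hLm.log)).const_mul z).cexp
    · rw [← integrable_norm_iff]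
      · simp_rw [hnorm z₀]
        exact hint z₀.re hz₀.le
      · apply Measurable.aestronglyMeasurable
        exact (Complex.measurable_ofReal.comp hp0m).mul
          ((Complex.measurable_ofReal.comp (hLm.log)).const_mul z₀).cexp
    · apply Measurable.aestronglyMeasurable
      exact ((Complex.measurable_ofReal.comp hp0m).mul
        (Complex.measurable_ofReal.comp (hLm.log))).mul
        ((Complex.measurable_ofReal.comp (hLm.log)).const_mul z₀).cexp
    · refine Filter.Eventually.of_forall fun x => fun z hz => ?_
      have hzre : m ≤ z.re := by
        have := Metric.mem_ball.1 hz
        have h2 : |z.re - z₀.re| ≤ ‖z - z₀‖ := by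
          simpa using Complex.abs_re_le_norm (z - z₀)
        rw [Complex.dist_eq] at this
        rw [abs_le] at h2
        rw [hm, hr] at *
        linarith [h2.1]
      have hδ : (0:ℝ) < ε + m := by rw [hm]; linarith
      rw [norm_mul, hexp z x]
      have h1 : L x ^ z.re ≤ L x ^ m := hmono x hzre
      have h2 : |Real.log (L x)| ≤ L x ^ (-(ε + m)) / (ε + m) :=
        abs_log_le (hLpos x) (hL1 x) hδ
      have h3 : ‖(p0 x : ℂ) * (Real.log (L x) : ℂ)‖ = p0 x * |Real.log (L x)| := by
        rw [norm_mul, Complex.norm_real, Complex.norm_real, Real.norm_eq_abs, Real.norm_eq_abs,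
          abs_of_nonneg (hp0 x)]
      rw [h3]
      calc p0 x * |Real.log (L x)| * L x ^ z.re
          ≤ p0 x * (L x ^ (-(ε + m)) / (ε + m)) * L x ^ m := by
            refine mul_le_mul (mul_le_mul_of_nonneg_left h2 (hp0 x)) h1
              (Real.rpow_pos_of_pos (hLpos x) _).le ?_
            exact mul_nonneg (hp0 x) (div_nonneg (Real.rpow_pos_of_pos (hLpos x) _).le hδ.le)
        _ = p0 x * L x ^ (-ε) / r := by
            have hh : L x ^ (-(ε + m)) * L x ^ m = L x ^ (-ε) := by
              rw [← Real.rpow_add (hLpos x)]; congr 1; ring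
            have hrm : ε + m = r := by rw [hm, hr]; ring
            have hne : ε + m ≠ 0 := hδ.ne'
            rw [← hrm, ← hh]; field_simp
    · refine Filter.Eventually.of_forall fun x => fun z hz => ?_
      have h1 : HasDerivAt (fun z : ℂ => z * (Real.log (L x) : ℂ)) (Real.log (L x) : ℂ) z :=
        hasDerivAt_mul_const _
      have h2 := (h1.cexp).const_mul (p0 x : ℂ)
      refine h2.congr_deriv ?_
      ring
  -- F ↑t = ↑(Z t) for t > -ε
  have hFZ : ∀ t : ℝ, -ε ≤ t → F (t : ℂ) = ((Z t : ℝ) : ℂ) := by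
    intro t ht
    have hx : ∀ x, (p0 x : ℂ) * Complex.exp ((t:ℂ) * (Real.log (L x) : ℂ))
        = ((p0 x * L x ^ t : ℝ) : ℂ) := by
      intro x
      have hre : p0 x * L x ^ t = p0 x * Real.exp (t * Real.log (L x)) := by
        rw [Real.rpow_def_of_pos (hLpos x), mul_comm (Real.log (L x)) t]
      rw [hre, Complex.ofReal_mul, Complex.ofReal_exp, Complex.ofReal_mul]
    calc F (t : ℂ) = ∫ x, ((p0 x * L x ^ t : ℝ) : ℂ) := by
            rw [hF]; simp only [hx]
      _ = ((∫ x, p0 x * L x ^ t : ℝ) : ℂ) := integral_ofReal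
      _ = ((Z t : ℝ) : ℂ) := by rw [hZ t]
  -- Z is analytic at each point of Ioi (-ε)
  have hZana : ∀ t₀ : ℝ, -ε < t₀ → AnalyticAt ℝ Z t₀ := by
    intro t₀ ht₀
    have hFana : AnalyticAt ℂ F (t₀ : ℂ) := by
      have hU : IsOpen {z : ℂ | -ε < z.re} := isOpen_lt continuous_const Complex.continuous_re
      have := (DifferentiableOn.analyticOnNhd
        (fun z hz => (hFdiff z hz).differentiableWithinAt) hU)
      exact this _ (by show -ε < (t₀ : ℂ).re; simpa using ht₀)
    have h2 : AnalyticAt ℝ (fun t : ℝ => (F (t : ℂ)).re) t₀ :=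
      (Complex.reCLM.analyticAt _).comp
        ((hFana.restrictScalars).comp (Complex.ofRealCLM.analyticAt _))
    refine h2.congr ?_
    have : ∀ᶠ t in nhds t₀, -ε < t := eventually_gt_nhds ht₀
    filter_upwards [this] with t ht
    rw [hFZ t ht.le, Complex.ofReal_re]
  constructor
  · -- analyticity
    intro t₀ ht₀
    have h1 : AnalyticAt ℝ (fun t => Real.log (Z t)) t₀ :=
      (analyticAt_rlog (hZpos t₀ (le_trans (by linarith) ht₀.1))).comp
        (hZana t₀ (by linarith [ht₀.1]))
    exact h1.analyticWithinAt
  · intro t₀ ht₀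
    have hd := (hZderiv t₀ ht₀).log (hZpos t₀ (le_trans (by linarith) ht₀.1)).ne'
    have heq : (∫ x, p0 x * L x ^ t₀ * Real.log (L x)) / Z t₀
        = ∫ x, Real.log (L x) * (p0 x * L x ^ t₀ / Z t₀) := by
      rw [← integral_div]
      congr 1
      funext x
      ring
    rw [heq] at hd
    exact hd.hasDerivWithinAt
end
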